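/- Let L be a finite lattice with least element ⊥ and greatest element ⊤, and let μ, ν : L → ℝ be valuations with ν strictly monotone and μ monotone. Then any two maximal chains from ⊥ to ⊤ have the same divergence: for any two maximal chains ⊥ = m_0 ⋖ ⋯ ⋖ m_r = ⊤ and ⊥ = m'_0 ⋖ ⋯ ⋖ m'_s = ⊤, one has ∑_{i=1}^r f(Δμ_i/Δν_i)·Δν_i = ∑_{i=1}^s f(Δμ'_i/Δν'_i)·Δν'_i. -/

import Mathlib

/-- The function `f(x) = x·ln x − (x − 1)` (note `f 0 = 1` since `Real.log 0 = 0`). -/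
noncomputable def divF (x : ℝ) : ℝ := x * Real.log x - (x - 1)

/-- In a finite lattice with valuations `μ` (monotone) and `ν` (strictly monotone),
any two maximal chains from `⊥` to `⊤` have the same information divergence. -/
theorem maximal_chains_same_divergence
    {L : Type*} [Lattice L] [Fintype L] [BoundedOrder L]
    (μ ν : L → ℝ)
    (hμ0 : μ ⊥ = 0) (hμmono : Monotone μ)
    (hμmod : ∀ a b : L, μ a + μ b = μ (a ⊓ b) + μ (a ⊔ b))
    (hν0 : ν ⊥ = 0) (hνsm : StrictMono ν)
    (hνmod : ∀ a b : L, ν a + ν b = ν (a ⊓ b) + ν (a ⊔ b))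
    (r s : ℕ) (m : Fin (r + 1) → L) (m' : Fin (s + 1) → L)
    (hm0 : m 0 = ⊥) (hmtop : m (Fin.last r) = ⊤)
    (hmcov : ∀ i : Fin r, m i.castSucc ⋖ m i.succ)
    (hm'0 : m' 0 = ⊥) (hm'top : m' (Fin.last s) = ⊤)
    (hm'cov : ∀ i : Fin s, m' i.castSucc ⋖ m' i.succ) :
    ∑ i : Fin r,
        divF ((μ (m i.succ) - μ (m i.castSucc)) / (ν (m i.succ) - ν (m i.castSucc)))
          * (ν (m i.succ) - ν (m i.castSucc))
      = ∑ i : Fin s,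
          divF ((μ (m' i.succ) - μ (m' i.castSucc)) / (ν (m' i.succ) - ν (m' i.castSucc)))
            * (ν (m' i.succ) - ν (m' i.castSucc)) := by
  letI jhl : JordanHolderLattice L :=
    { IsMaximal := (· ⋖ ·)
      lt_of_isMaximal := fun h => h.lt
      sup_eq_of_isMaximal := by
        intro x y z hx hy hne
        have hyx : ¬ y ≤ x := by
          intro h
          exact hy.2 (lt_of_le_of_ne h hne.symm) hx.lt
        have h1 : x < x ⊔ y := lt_of_le_of_ne le_sup_left (fun h => hyx (h ▸ le_sup_right))
        have h2 : x ⊔ y ≤ z := sup_le hx.lt.le hy.lt.le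
        exact le_antisymm h2 (by
          by_contra hlt
          exact hx.2 h1 (lt_of_le_of_ne h2 (fun h => hlt (h ▸ le_refl z))))
      isMaximal_inf_left_of_isMaximal_sup := by
        intro x y hx hy
        have hlt : x ⊓ y < x := by
          rcases lt_or_eq_of_le (inf_le_left : x ⊓ y ≤ x) with h | h
          · exact h
          · exfalso
            have hxy : x ≤ y := inf_eq_left.mp h
            have h2 : x ⊔ y = y := sup_eq_right.mpr hxy
            rw [h2] at hy
            exact lt_irrefl y hy.lt
        refine ⟨hlt, ?_⟩
        intro c hc1 hc2
        have hysc : y < c ⊔ y := by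
          rcases lt_or_eq_of_le (le_sup_right : y ≤ c ⊔ y) with h | h
          · exact h
          · exfalso
            have : c ≤ y := by rw [h]; exact le_sup_left
            exact (not_le_of_gt hc1) (le_inf hc2.le this)
        have hsup : c ⊔ y = x ⊔ y := by
          have hle : c ⊔ y ≤ x ⊔ y := sup_le (le_trans hc2.le le_sup_left) le_sup_right
          rcases lt_or_eq_of_le hle with h | h
          · exact absurd h (hy.2 hysc)
          · exact h
        have hinf : c ⊓ y = x ⊓ y :=
          le_antisymm (le_inf (le_trans inf_le_left hc2.le) inf_le_right)
            (le_inf hc1.le inf_le_right)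
        have h1 := hνmod c y
        rw [hinf, hsup, ← hνmod x y] at h1
        have : ν c = ν x := by linarith
        exact absurd this (ne_of_lt (hνsm hc2))
      }
  let s₁ : CompositionSeries L := ⟨r, m, hmcov⟩
  let s₂ : CompositionSeries L := ⟨s, m', hm'cov⟩
  have hhead : s₁.head = s₂.head := by
    show m 0 = m' 0
    rw [hm0, hm'0]
  have hlast : s₁.last = s₂.last := by
    show m (Fin.last r) = m' (Fin.last s)
    rw [hmtop, hm'top]
  obtain ⟨e, he⟩ := CompositionSeries.jordan_holder s₁ s₂ hhead hlast
  refine Fintype.sum_equiv e _ _ ?_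
  intro i
  obtain ⟨h1, h2⟩ := JordanHolderLattice.Iso.rel
    (fun p q : L × L => μ p.2 - μ p.1 = μ q.2 - μ q.1 ∧ ν p.2 - ν p.1 = ν q.2 - ν q.1)
    ⟨rfl, rfl⟩ (fun h => ⟨h.1.symm, h.2.symm⟩)
    (fun h1 h2 => ⟨h1.1.trans h2.1, h1.2.trans h2.2⟩)
    (fun {x y} _ => by
      constructor
      · have := hμmod x y; dsimp only; linarith
      · have := hνmod x y; dsimp only; linarith) (he i)
  show divF ((μ (m i.succ) - μ (m i.castSucc)) / (ν (m i.succ) - ν (m i.castSucc)))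
          * (ν (m i.succ) - ν (m i.castSucc))
      = divF ((μ (m' (e i).succ) - μ (m' (e i).castSucc)) /
            (ν (m' (e i).succ) - ν (m' (e i).castSucc)))
          * (ν (m' (e i).succ) - ν (m' (e i).castSucc))
  rw [show (μ (m i.succ) - μ (m i.castSucc)) = μ (m' (e i).succ) - μ (m' (e i).castSucc) from h1,
    show (ν (m i.succ) - ν (m i.castSucc)) = ν (m' (e i).succ) - ν (m' (e i).castSucc) from h2]
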